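/- (Core of the Moore–Aronszajn construction.) Let E be a set and k : E × E → ℝ a symmetric, positive semidefinite kernel. On the real vector space H_0 of functions of the form f = Σ_{i=1}^N a_i k(·, x_i) (finite linear combinations, x_i ∈ E, a_i ∈ ℝ), the assignment ⟨Σ_i a_i k(·, x_i), Σ_j b_j k(·, y_j)⟩ := Σ_i Σ_j a_i b_j k(x_i, y_j) is well defined (its value depends only on the functions, not on the chosen representations), is symmetric and bilinear, satisfies ⟨f, f⟩ ≥ 0 for all f ∈ H_0, satisfies the reproducing property f(x) = ⟨k(·, x), f⟩ for all f ∈ H_0 and x ∈ E, and satisfies ⟨f, f⟩ = 0 only if f is the zero function; hence it is an inner product on H_0. -/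

import Mathlib

/-- The function `k(·, x) : E → ℝ` associated to a kernel `k` and a point `x`. -/
noncomputable def kernelSection {E : Type*} (k : E → E → ℝ) (x : E) : E → ℝ :=
  fun y => k y x

section MAaux
variable {E : Type*} (k : E → E → ℝ)

/-- The map sending a finitely supported coefficient function to the corresponding
linear combination of kernel sections. -/
noncomputable def maT : (E →₀ ℝ) →ₗ[ℝ] (E → ℝ) :=
  Finsupp.linearCombination ℝ (kernelSection k)

/-- `maPsi f d = ∑ d y * f y`, linear in both `f` and `d`. -/
noncomputable def maPsi : (E → ℝ) →ₗ[ℝ] (E →₀ ℝ) →ₗ[ℝ] ℝ where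
  toFun f := Finsupp.linearCombination ℝ f
  map_add' f g := by
    ext d
    simp [Finsupp.linearCombination_apply, Finsupp.sum, Finset.sum_add_distrib, mul_add]
  map_smul' c f := by
    ext d
    simp [Finsupp.linearCombination_apply, Finsupp.sum, Finset.mul_sum, mul_left_comm]

lemma maPsi_apply (f : E → ℝ) (d : E →₀ ℝ) :
    maPsi f d = ∑ y ∈ d.support, d y * f y := by
  simp [maPsi, Finsupp.linearCombination_apply, Finsupp.sum, smul_eq_mul]

lemma maT_apply (c : E →₀ ℝ) (y : E) :
    maT k c y = ∑ x ∈ c.support, c x * k y x := by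
  simp [maT, Finsupp.linearCombination_apply, Finsupp.sum, kernelSection]

lemma maPsi_swap (hsymm : ∀ x y, k x y = k y x) (c d : E →₀ ℝ) :
    maPsi (maT k c) d = maPsi (maT k d) c := by
  simp only [maPsi_apply, maT_apply, Finset.mul_sum]
  rw [Finset.sum_comm]
  apply Finset.sum_congr rfl
  intro x _
  apply Finset.sum_congr rfl
  intro y _
  rw [hsymm x y]; ring

end MAaux

/-- (Core of the Moore–Aronszajn construction.)  Let `k` be a
symmetric positive semidefinite kernel on a set `E`.  On the vector space `H₀`
of finite linear combinations `Σᵢ aᵢ k(·, xᵢ)` (the span of the kernel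
sections), there is a bilinear form `B` which is well defined (it depends only
on the functions, not on the chosen representations) with
`B (Σᵢ aᵢ k(·, xᵢ)) (Σⱼ bⱼ k(·, yⱼ)) = Σᵢ Σⱼ aᵢ bⱼ k(xᵢ, yⱼ)`, is symmetric,
positive (`B f f ≥ 0`), satisfies the reproducing property
`f(x) = B (k(·, x)) f`, and is definite (`B f f = 0` only for `f = 0`); hence
it is an inner product on `H₀`. -/
theorem moore_aronszajn_core
    {E : Type*} (k : E → E → ℝ)
    (hsymm : ∀ x y, k x y = k y x)
    (hpsd : ∀ (n : ℕ) (x : Fin n → E) (c : Fin n → ℝ),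
      0 ≤ ∑ i, ∑ j, c i * c j * k (x i) (x j)) :
    ∃ B : (Submodule.span ℝ (Set.range (kernelSection k))) →ₗ[ℝ]
          (Submodule.span ℝ (Set.range (kernelSection k))) →ₗ[ℝ] ℝ,
      (∀ (f g : Submodule.span ℝ (Set.range (kernelSection k)))
         (N M : ℕ) (a : Fin N → ℝ) (x : Fin N → E) (b : Fin M → ℝ) (y : Fin M → E),
         (f : E → ℝ) = ∑ i, a i • kernelSection k (x i) →
         (g : E → ℝ) = ∑ j, b j • kernelSection k (y j) →
         B f g = ∑ i, ∑ j, a i * b j * k (x i) (y j)) ∧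
      (∀ f g, B f g = B g f) ∧
      (∀ f, 0 ≤ B f f) ∧
      (∀ (f : Submodule.span ℝ (Set.range (kernelSection k))) (x : E),
         (f : E → ℝ) x = B ⟨kernelSection k x, Submodule.subset_span ⟨x, rfl⟩⟩ f) ∧
      (∀ f, B f f = 0 → f = 0) := by
  classical
  set H₀ := Submodule.span ℝ (Set.range (kernelSection k)) with hH₀
  -- every element of H₀ has a representative
  have hrange : ∀ f : H₀, ∃ c : E →₀ ℝ, maT k c = (f : E → ℝ) := by
    intro f
    have hf : (f : E → ℝ) ∈ LinearMap.range (maT k) := by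
      rw [maT, Finsupp.range_linearCombination]
      exact f.2
    exact hf
  choose rep hrep using hrange
  -- swap lemma at the level of H₀
  have sw : ∀ f g : H₀, maPsi ((f : E → ℝ)) (rep g) = maPsi ((g : E → ℝ)) (rep f) := by
    intro f g
    rw [← hrep f, maPsi_swap k hsymm, hrep g]
  -- the bilinear form
  let B : H₀ →ₗ[ℝ] H₀ →ₗ[ℝ] ℝ :=
    { toFun := fun f =>
        { toFun := fun g => maPsi ((f : E → ℝ)) (rep g)
          map_add' := by
            intro g g'
            have hc : ((g + g' : H₀) : E → ℝ) = (g : E → ℝ) + (g' : E → ℝ) := rfl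
            rw [sw f (g + g'), hc, map_add, LinearMap.add_apply, ← sw f g, ← sw f g']
          map_smul' := by
            intro c g
            have hc : ((c • g : H₀) : E → ℝ) = c • (g : E → ℝ) := rfl
            rw [sw f (c • g), hc, map_smul, LinearMap.smul_apply, ← sw f g]
            simp }
      map_add' := by
        intro f f'
        apply LinearMap.ext
        intro g
        have hc : ((f + f' : H₀) : E → ℝ) = (f : E → ℝ) + (f' : E → ℝ) := rfl
        simp only [LinearMap.coe_mk, AddHom.coe_mk, LinearMap.add_apply, hc, map_add,
          LinearMap.add_apply]
      map_smul' := by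
        intro c f
        apply LinearMap.ext
        intro g
        have hc : ((c • f : H₀) : E → ℝ) = c • (f : E → ℝ) := rfl
        simp only [LinearMap.coe_mk, AddHom.coe_mk, RingHom.id_apply, LinearMap.smul_apply,
          hc, map_smul, LinearMap.smul_apply] }
  have hBapp : ∀ f g : H₀, B f g = maPsi ((f : E → ℝ)) (rep g) := fun _ _ => rfl
  -- value on any representative
  have hBrep : ∀ (f g : H₀) (d : E →₀ ℝ), maT k d = (g : E → ℝ) →
      B f g = maPsi ((f : E → ℝ)) d := by
    intro f g d hd
    rw [hBapp, ← hrep f, maPsi_swap k hsymm, hrep g, ← hd, maPsi_swap k hsymm, hrep f]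
  -- symmetry
  have hsym : ∀ f g : H₀, B f g = B g f := by
    intro f g
    rw [hBapp, hBapp, sw]
  -- explicit formula
  have hform : ∀ (f g : H₀) (N M : ℕ) (a : Fin N → ℝ) (x : Fin N → E)
      (b : Fin M → ℝ) (y : Fin M → E),
      (f : E → ℝ) = ∑ i, a i • kernelSection k (x i) →
      (g : E → ℝ) = ∑ j, b j • kernelSection k (y j) →
      B f g = ∑ i, ∑ j, a i * b j * k (x i) (y j) := by
    intro f g N M a x b y hf hg
    have hd : maT k (∑ j, Finsupp.single (y j) (b j)) = (g : E → ℝ) := by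
      rw [hg, map_sum]
      refine Finset.sum_congr rfl fun j _ => ?_
      simp [maT, Finsupp.linearCombination_single]
    rw [hBrep f g _ hd, map_sum]
    have hfe : ∀ z : E, (f : E → ℝ) z = ∑ i, a i * k z (x i) := by
      intro z
      rw [hf]
      simp [kernelSection]
    have hterm : ∀ j, maPsi ((f : E → ℝ)) (Finsupp.single (y j) (b j))
        = b j * (f : E → ℝ) (y j) := by
      intro j
      simp [maPsi, Finsupp.linearCombination_single]
    simp only [hterm, hfe, Finset.mul_sum]
    rw [Finset.sum_comm]
    refine Finset.sum_congr rfl fun i _ => Finset.sum_congr rfl fun j _ => ?_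
    rw [hsymm (y j) (x i)]
    ring
  -- positivity
  have hpos : ∀ f : H₀, 0 ≤ B f f := by
    intro f
    rw [hBapp, ← hrep f, maT]
    set c := rep f with hc
    set s := c.support with hs
    have hsum : ∀ F : E → ℝ, ∑ z ∈ s, F z = ∑ i : Fin s.card, F ((s.equivFin.symm i : s) : E) := by
      intro F
      rw [← Finset.sum_coe_sort s F, ← Equiv.sum_comp s.equivFin.symm (fun z : s => F z)]
    have expand : maPsi (maT k c) c
        = ∑ z ∈ s, ∑ w ∈ s, c z * c w * k z w := by
      rw [maPsi_apply]
      refine Finset.sum_congr rfl fun z _ => ?_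
      rw [maT_apply, Finset.mul_sum]
      refine Finset.sum_congr rfl fun w _ => ?_
      rw [hsymm z w]; ring
    rw [maT] at expand
    rw [expand, hsum]
    have : ∀ i : Fin s.card, ∑ w ∈ s, c ((s.equivFin.symm i : s) : E) * c w
          * k ((s.equivFin.symm i : s) : E) w
        = ∑ j : Fin s.card, c ((s.equivFin.symm i : s) : E) * c ((s.equivFin.symm j : s) : E)
          * k ((s.equivFin.symm i : s) : E) ((s.equivFin.symm j : s) : E) := by
      intro i
      exact hsum _
    simp only [this]
    exact hpsd s.card (fun i => ((s.equivFin.symm i : s) : E)) (fun i => c ((s.equivFin.symm i : s) : E))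
  -- reproducing property
  have hrepr : ∀ (f : H₀) (x : E),
      (f : E → ℝ) x = B ⟨kernelSection k x, Submodule.subset_span ⟨x, rfl⟩⟩ f := by
    intro f x
    have hd : maT k (Finsupp.single x 1)
        = ((⟨kernelSection k x, Submodule.subset_span ⟨x, rfl⟩⟩ : H₀) : E → ℝ) := by
      simp [maT, Finsupp.linearCombination_single]
    rw [hsym, hBrep f _ _ hd]
    simp [maPsi, Finsupp.linearCombination_single]
  -- definiteness
  have hdef : ∀ f : H₀, B f f = 0 → f = 0 := by
    intro f hf
    have hzero : ∀ x : E, (f : E → ℝ) x = 0 := by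
      intro x
      set g : H₀ := ⟨kernelSection k x, Submodule.subset_span ⟨x, rfl⟩⟩ with hg
      have ha : 0 ≤ B g g := hpos g
      have hb : B g f = (f : E → ℝ) x := (hrepr f x).symm
      have hq : ∀ t : ℝ, 0 ≤ 2 * t * (B g f) + t ^ 2 * (B g g) := by
        intro t
        have h0 := hpos (f + t • g)
        have : B (f + t • g) (f + t • g)
            = B f f + 2 * t * (B g f) + t ^ 2 * (B g g) := by
          simp only [map_add, map_smul, LinearMap.add_apply, LinearMap.smul_apply,
            smul_eq_mul]
          rw [hsym f g]
          ring
        rw [this, hf] at h0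
        linarith
      have ht := hq (-(B g f) / (B g g + 1))
      have h1 : 0 < B g g + 1 := by linarith
      have key : (2 * (-(B g f) / (B g g + 1)) * (B g f)
            + (-(B g f) / (B g g + 1)) ^ 2 * (B g g)) * (B g g + 1) ^ 2
          = -(B g f) ^ 2 * (B g g + 2) := by
        field_simp
        ring
      have h3 : 0 ≤ -(B g f) ^ 2 * (B g g + 2) := by
        rw [← key]
        exact mul_nonneg ht (sq_nonneg _)
      have h4 : (B g f) ^ 2 ≤ 0 := by nlinarith
      have hb0 : B g f = 0 := by
        have := le_antisymm h4 (sq_nonneg _)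
        exact pow_eq_zero_iff (by norm_num) |>.mp this
      rw [← hb, hb0]
    apply Subtype.ext
    funext x
    exact hzero x
  exact ⟨B, hform, hsym, hpos, hrepr, hdef⟩
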